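/- Let C be any group, let D be a torsion-free group, let n ∈ ℕ, let Fₙ be the free group of rank n, and let Z be an infinite cyclic group. Form the free product H₁ = D * (C × Fₙ) * Z, and let ι : C → H₁ be the canonical embedding (C into the factor C × Fₙ into H₁). Then for every m ∈ ℕ: (1) tor_m(H₁) equals the normal closure in H₁ of ι(tor_m(C)); and (2) the preimage under ι of tor_m(H₁) equals tor_m(C). -/

import Mathlib

/-- The ascending chain of normal subgroups `tor₀(G) = 1`,
`tor_{n+1}(G) = ⟪elements of finite order mod tor_n(G)⟫`. -/
def tor (G : Type*) [Group G] : ℕ → Subgroup G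
  | 0 => ⊥
  | n + 1 => Subgroup.normalClosure {g : G | ∃ k : ℕ, 0 < k ∧ g ^ k ∈ tor G n}

/-- Index type for the three free factors of `H₁ = D * (C × Fₙ) * Z`. -/
inductive Idx3 | d | c | z

/-- The family of the three free factors `D`, `C × Fₙ` and `Z` (infinite cyclic). -/
def fam (C D : Type u) [Group C] [Group D] (n : ℕ) : Idx3 → Type u
  | .d => D
  | .c => C × FreeGroup (Fin n)
  | .z => ULift (Multiplicative ℤ)

instance (C D : Type u) [Group C] [Group D] (n : ℕ) : ∀ i, Group (fam C D n i)
  | .d => inferInstanceAs (Group D)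
  | .c => inferInstanceAs (Group (C × FreeGroup (Fin n)))
  | .z => inferInstanceAs (Group (ULift (Multiplicative ℤ)))

/-- The canonical embedding `C → H₁ = D * (C × Fₙ) * Z`, through the factor `C × Fₙ`. -/
def emb (C D : Type u) [Group C] [Group D] (n : ℕ) :
    C →* Monoid.CoprodI (fam C D n) :=
  (Monoid.CoprodI.of (M := fam C D n) (i := .c)).comp
    (MonoidHom.inl C (FreeGroup (Fin n)))

open Monoid.CoprodI

namespace TorAux

variable {ι : Type*} {G : ι → Type*} [∀ i, Group (G i)]

theorem word_prod_injective [DecidableEq ι] [∀ i, DecidableEq (G i)] :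
    Function.Injective (Word.prod (M := G)) :=
  Word.equiv.symm.injective

theorem neword_prod_ne_one [DecidableEq ι] [∀ i, DecidableEq (G i)] {i j : ι}
    (w : NeWord G i j) : w.prod ≠ 1 := by
  intro h
  have h0 : w.toWord ≠ Word.empty := by
    intro he
    have := w.toList_ne_nil
    rw [show w.toList = w.toWord.toList from rfl, he] at this
    exact this rfl
  exact h0 (word_prod_injective (by simpa [NeWord.prod] using h))

theorem pow_neword {i j : ι} (hij : i ≠ j) (w : NeWord G i j) :
    ∀ k : ℕ, ∃ w' : NeWord G i j, w'.prod = w.prod ^ (k + 1) := by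
  intro k
  induction k with
  | zero => exact ⟨w, by simp⟩
  | succ k ih =>
    obtain ⟨w', hw'⟩ := ih
    exact ⟨NeWord.append w hij.symm w', by rw [NeWord.append_prod, hw', ← pow_succ']⟩

/-- local abbreviation for product of a letter list -/
def lp (l : List (Σ i, G i)) : Monoid.CoprodI G :=
  (l.map fun p => of p.2).prod

@[simp] theorem lp_nil : lp ([] : List (Σ i, G i)) = 1 := rfl

@[simp] theorem lp_cons (a : Σ i, G i) (l : List (Σ i, G i)) :
    lp (a :: l) = of a.2 * lp l := by simp [lp]

@[simp] theorem lp_append (l₁ l₂ : List (Σ i, G i)) :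
    lp (l₁ ++ l₂) = lp l₁ * lp l₂ := by simp [lp]

theorem word_prod_eq_lp (w : Word G) : w.prod = lp w.toList := rfl

theorem prod_equiv [DecidableEq ι] [∀ i, DecidableEq (G i)] (x : Monoid.CoprodI G) :
    (Word.equiv x).prod = x := Word.equiv.symm_apply_apply x

theorem eq_one_of_toList_nil [DecidableEq ι] [∀ i, DecidableEq (G i)]
    {x : Monoid.CoprodI G} (h : (Word.equiv x).toList = []) : x = 1 := by
  have h2 : Word.equiv x = Word.empty := Word.ext h
  have h3 := prod_equiv x
  rw [h2, Word.prod_empty] at h3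
  exact h3.symm

/-- Key lemma: a torsion element of a free product is conjugate into a factor. -/
theorem torsion_conj {k : ℕ} (hk : 0 < k) (x : Monoid.CoprodI G) (hx : x ^ k = 1) :
    x = 1 ∨ ∃ (h : Monoid.CoprodI G) (i : ι) (g : G i),
      g ^ k = 1 ∧ x = h * of g * h⁻¹ := by
  classical
  suffices H : ∀ N : ℕ, ∀ x : Monoid.CoprodI G, (Word.equiv x).toList.length ≤ N →
      x ^ k = 1 → x = 1 ∨ ∃ (h : Monoid.CoprodI G) (i : ι) (g : G i),
        x = h * of g * h⁻¹ by
    rcases H _ x le_rfl hx with h1 | ⟨h, i, g, rfl⟩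
    · exact Or.inl h1
    · refine Or.inr ⟨h, i, g, ?_, rfl⟩
      rw [conj_pow] at hx
      have h2 : of g ^ k = 1 := by
        have h3 : h⁻¹ * (h * of g ^ k * h⁻¹) * h = h⁻¹ * 1 * h := by rw [hx]
        simpa [mul_assoc] using h3
      exact (map_eq_one_iff _ (Monoid.CoprodI.of_injective i)).1 (by rw [map_pow]; exact h2)
  intro N
  induction N with
  | zero =>
    intro x hlen _
    exact Or.inl (eq_one_of_toList_nil (List.length_eq_zero_iff.mp (Nat.le_zero.mp hlen)))
  | succ N ih =>
    intro x hlen hxk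
    rcases hl : (Word.equiv x).toList with _ | ⟨a, l'⟩
    · exact Or.inl (eq_one_of_toList_nil hl)
    have hxprod : x = lp ((Word.equiv x).toList) := by
      rw [← word_prod_eq_lp, prod_equiv]
    rcases hl' : l' with _ | ⟨b0, l''⟩
    · -- single letter
      right
      refine ⟨1, a.1, a.2, ?_⟩
      rw [hxprod, hl, hl']
      simp
    -- length ≥ 2
    clear hl'
    rcases List.eq_nil_or_concat l' with rfl | ⟨m, b, rfl⟩
    · -- single letter
      right
      refine ⟨1, a.1, a.2, ?_⟩
      rw [hxprod, hl]
      simp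
    rw [List.concat_eq_append] at hl
    by_cases hii : a.1 = b.1
    · -- first and last letters in the same factor: conjugate and shrink
      obtain ⟨i1, g1⟩ := a
      obtain ⟨i2, g2⟩ := b
      dsimp at hii
      subst hii
      have e1 : x = of g1 * lp m * of g2 := by
        rw [hxprod, hl]; simp [mul_assoc]
      set y := of g2 * x * (of g2)⁻¹ with hydef
      have hy : y = of (g2 * g1) * lp m := by
        rw [hydef, e1, map_mul]
        simp [mul_assoc]
      have hyk : y ^ k = 1 := by
        rw [hydef, conj_pow, hxk, mul_one, mul_inv_cancel]
      have hm_ne_one : ∀ p ∈ m, p.2 ≠ 1 := fun p hp =>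
        (Word.equiv x).ne_one p (by rw [hl]; simp [hp])
      have hm_chain : m.Chain' (fun p q => p.1 ≠ q.1) :=
        (Word.equiv x).chain_ne.infix (by exact ⟨[⟨i1, g1⟩], [⟨i1, g2⟩], by rw [hl]; simp⟩)
      have hchain_l := (Word.equiv x).chain_ne
      rw [hl, List.isChain_cons] at hchain_l
      have hhead2 : ∀ q ∈ m.head?, i1 ≠ q.1 := by
        intro q hq
        apply hchain_l.1
        rcases m with _ | ⟨c, m'⟩
        · simp at hq
        · simpa using hq
      -- a word representing y
      have hwy : ∃ wy : Word G, wy.prod = y ∧ wy.toList.length ≤ N := by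
        by_cases hgg : g2 * g1 = 1
        · refine ⟨⟨m, hm_ne_one, hm_chain⟩, ?_, ?_⟩
          · rw [word_prod_eq_lp]
            dsimp only
            rw [hy, hgg, map_one, one_mul]
          · show m.length ≤ N
            have := hlen
            rw [hl] at this
            simp at this
            omega
        · refine ⟨⟨⟨i1, g2 * g1⟩ :: m, ?_, ?_⟩, ?_, ?_⟩
          · intro p hp
            rcases List.mem_cons.mp hp with rfl | hp
            · exact hgg
            · exact hm_ne_one p hp
          · rw [List.isChain_cons]
            exact ⟨hhead2, hm_chain⟩
          · rw [word_prod_eq_lp]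
            dsimp only
            rw [lp_cons, ← hy]
          · show m.length + 1 ≤ N
            have := hlen
            rw [hl] at this
            simp at this
            omega
      obtain ⟨wy, hwyp, hwyl⟩ := hwy
      have heq : Word.equiv y = wy := by
        apply word_prod_injective
        rw [prod_equiv, hwyp]
      rcases ih y (by rw [heq]; exact hwyl) hyk with hy1 | ⟨h, i, g, hyc⟩
      · left
        have : x = (of g2)⁻¹ * y * of g2 := by rw [hydef]; group
        rw [this, hy1]
        group
      · right
        refine ⟨(of g2)⁻¹ * h, i, g, ?_⟩
        have : x = (of g2)⁻¹ * y * of g2 := by rw [hydef]; group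
        rw [this, hyc]
        group
    · -- first and last letters in different factors: x has infinite order
      exfalso
      have hwne : Word.equiv x ≠ Word.empty := by
        intro h
        rw [h] at hl
        simp [Word.empty] at hl
      obtain ⟨i, j, nw, hnw⟩ := Monoid.CoprodI.NeWord.of_word (Word.equiv x) hwne
      have hlist : nw.toList = (Word.equiv x).toList := by
        rw [← hnw]; rfl
      have hhead : (a :: (m ++ [b])).head? = some ⟨i, nw.head⟩ := by
        rw [← hl, ← hlist]; exact nw.toList_head?
      have hlast : (a :: (m ++ [b])).getLast? = some ⟨j, nw.last⟩ := by
        rw [← hl, ← hlist]; exact nw.toList_getLast?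
      have hai : a.1 = i := by
        simp only [List.head?_cons, Option.some.injEq] at hhead
        rw [hhead]
      have hbj : b.1 = j := by
        have : (a :: (m ++ [b])).getLast? = some b := by
          rw [List.getLast?_eq_getLast (by simp)]
          simp [List.getLast_append]
        rw [this] at hlast
        rw [Option.some.injEq] at hlast
        exact congrArg Sigma.fst hlast
      have hij : i ≠ j := by rw [← hai, ← hbj]; exact hii
      have hnwp : nw.prod = x := by
        show nw.toWord.prod = x
        rw [hnw, prod_equiv]
      obtain ⟨w', hw'⟩ := pow_neword hij nw (k - 1)
      apply neword_prod_ne_one w'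
      rw [hw', hnwp]
      have : k - 1 + 1 = k := Nat.succ_pred_eq_of_pos hk
      rw [this, hxk]



/-- "pow torsion-free" -/
def PTF (G : Type*) [Group G] : Prop := ∀ g : G, ∀ k : ℕ, 0 < k → g ^ k = 1 → g = 1

theorem ptf_of_torsionFree {G : Type*} [Group G] (h : ∀ g : G, g ≠ 1 → ¬IsOfFinOrder g) : PTF G := by
  intro g k hk hgk
  by_contra hg
  exact h g hg (isOfFinOrder_iff_pow_eq_one.2 ⟨k, hk, hgk⟩)

theorem coprodI_ptf (h : ∀ i, PTF (G i)) : PTF (Monoid.CoprodI G) := by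
  intro x k hk hxk
  rcases torsion_conj hk x hxk with rfl | ⟨h', i, g, hg, rfl⟩
  · rfl
  · rw [h i g k hk hg]
    simp

theorem ptf_freeGroupUnit : PTF (FreeGroup Unit) := by
  intro x k hk hxk
  have hx : FreeGroup.of () ^ (FreeGroup.freeGroupUnitEquivInt x) = x :=
    FreeGroup.freeGroupUnitEquivInt.left_inv x
  set n := FreeGroup.freeGroupUnitEquivInt x with hn
  set ψ : FreeGroup Unit →* Multiplicative ℤ :=
    FreeGroup.lift fun _ => Multiplicative.ofAdd 1 with hψ
  have h1 : ψ (FreeGroup.of ()) = Multiplicative.ofAdd 1 := by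
    rw [hψ]; exact FreeGroup.lift_apply_of
  have h2 : ψ x = Multiplicative.ofAdd n := by
    rw [← hx, map_zpow, h1]
    rw [← ofAdd_zsmul]
    norm_num
  have h3 : ψ (x ^ k) = Multiplicative.ofAdd ((k : ℤ) * n) := by
    rw [map_pow, h2, ← ofAdd_nsmul]
    norm_num
  rw [hxk, map_one] at h3
  have h4 : (k : ℤ) * n = 0 := by
    have h3' := h3.symm
    rw [← ofAdd_zero] at h3'
    exact Multiplicative.ofAdd.injective h3' 
  have h5 : n = 0 := by
    rcases mul_eq_zero.mp h4 with h | h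
    · exfalso; omega
    · exact h
  rw [← hx, h5, zpow_zero]

theorem ptf_freeGroup (α : Type*) : PTF (FreeGroup α) := by
  intro x k hk hxk
  have e := freeGroupEquivCoprodI (ι := α)
  have h1 : (e x) ^ k = 1 := by rw [← map_pow, hxk, map_one]
  have h2 : e x = 1 := coprodI_ptf (fun _ => ptf_freeGroupUnit) (e x) k hk h1
  have := congrArg e.symm h2
  simpa using this

theorem ptf_ulift_int : PTF (ULift (Multiplicative ℤ)) := by
  intro g k hk hgk
  have h1 : g.down ^ k = 1 := congrArg ULift.down hgk
  have h2 : (k : ℤ) * Multiplicative.toAdd g.down = 0 := by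
    have := congrArg Multiplicative.toAdd h1
    simpa [toAdd_pow, nsmul_eq_mul] using this
  have h3 : Multiplicative.toAdd g.down = 0 := by
    rcases mul_eq_zero.mp h2 with h | h
    · exfalso
      rw [Nat.cast_eq_zero] at h
      omega
    · exact h
  apply ULift.ext
  have h4 : Multiplicative.ofAdd (Multiplicative.toAdd g.down) = Multiplicative.ofAdd 0 := by
    rw [h3]
  simpa using h4

end TorAux

namespace TorAux

section Fam

variable (C D : Type u) [Group C] [Group D] (n : ℕ)

theorem emb_injective : Function.Injective (emb C D n) := by
  intro a b h
  have h2 := Monoid.CoprodI.of_injective (M := fam C D n) Idx3.c h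
  exact congrArg Prod.fst h2

theorem of_c_eq (c : C) (f : FreeGroup (Fin n)) :
    Monoid.CoprodI.of (M := fam C D n) (i := .c) (c, f) =
      emb C D n c * Monoid.CoprodI.of (M := fam C D n) (i := .c) ((1 : C), f) := by
  rw [show emb C D n c = Monoid.CoprodI.of (M := fam C D n) (i := .c) (c, 1) from rfl]
  exact (congrArg (Monoid.CoprodI.of (M := fam C D n) (i := .c))
    (show ((c, f) : C × FreeGroup (Fin n)) = (c, 1) * (1, f) by simp)).trans
    (map_mul (Monoid.CoprodI.of (M := fam C D n) (i := .c)) ((c, 1) : fam C D n .c) ((1 : C), f))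

theorem classify (hD : ∀ g : D, g ≠ 1 → ¬IsOfFinOrder g) {k : ℕ} (hk : 0 < k)
    (x : Monoid.CoprodI (fam C D n)) (hx : x ^ k = 1) :
    ∃ (h : Monoid.CoprodI (fam C D n)) (c : C),
      c ^ k = 1 ∧ x = h * emb C D n c * h⁻¹ := by
  rcases torsion_conj hk x hx with rfl | ⟨h, i, g, hg, rfl⟩
  · exact ⟨1, 1, one_pow k, by simp⟩
  · match i with
    | .d =>
      have hg1 : g = 1 := ptf_of_torsionFree hD g k hk hg
      exact ⟨1, 1, one_pow k, by simp [hg1]⟩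
    | .z =>
      have hg1 : g = 1 := ptf_ulift_int g k hk hg
      exact ⟨1, 1, one_pow k, by simp [hg1]⟩
    | .c =>
      obtain ⟨c, f⟩ := g
      have hck : c ^ k = 1 := congrArg Prod.fst hg
      have hfk : f ^ k = 1 := congrArg Prod.snd hg
      have hf : f = 1 := ptf_freeGroup _ f k hk hfk
      subst hf
      exact ⟨h, c, hck, rfl⟩

end Fam

end TorAux

namespace TorAux

section Quot

variable (C D : Type u) [Group C] [Group D] (n : ℕ) (K : Subgroup C) [K.Normal]

/-- components of the map `H₁ → D * ((C/K) × Fₙ) * Z` -/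
def phiFam : ∀ i, fam C D n i →* Monoid.CoprodI (fam (C ⧸ K) D n)
  | .d => Monoid.CoprodI.of (M := fam (C ⧸ K) D n) (i := .d)
  | .c => (Monoid.CoprodI.of (M := fam (C ⧸ K) D n) (i := .c)).comp
      ((QuotientGroup.mk' K).prodMap (MonoidHom.id (FreeGroup (Fin n))))
  | .z => Monoid.CoprodI.of (M := fam (C ⧸ K) D n) (i := .z)

/-- The natural map `H₁ → D * ((C/K) × Fₙ) * Z`. -/
def phi : Monoid.CoprodI (fam C D n) →* Monoid.CoprodI (fam (C ⧸ K) D n) :=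
  Monoid.CoprodI.lift (phiFam C D n K)

theorem phi_of {i : Idx3} (g : fam C D n i) :
    phi C D n K (Monoid.CoprodI.of g) = phiFam C D n K i g :=
  Monoid.CoprodI.lift_of _ _

theorem phi_emb (c : C) :
    phi C D n K (emb C D n c) = emb (C ⧸ K) D n (QuotientGroup.mk c) := by
  rw [show emb C D n c = Monoid.CoprodI.of (M := fam C D n) (i := .c) (c, 1) from rfl]
  exact (phi_of C D n K (i := .c) (c, 1)).trans rfl

theorem phi_surjective : Function.Surjective (phi C D n K) := by
  intro x
  induction x using Monoid.CoprodI.induction_on with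
  | one => exact ⟨1, map_one _⟩
  | of i g =>
    match i with
    | .d => exact ⟨Monoid.CoprodI.of (M := fam C D n) (i := .d) g, (phi_of C D n K (i := .d) g).trans rfl⟩
    | .z => exact ⟨Monoid.CoprodI.of (M := fam C D n) (i := .z) g, (phi_of C D n K (i := .z) g).trans rfl⟩
    | .c =>
      obtain ⟨cb, f⟩ := g
      obtain ⟨c, rfl⟩ := QuotientGroup.mk_surjective cb
      exact ⟨Monoid.CoprodI.of (M := fam C D n) (i := .c) (c, f), (phi_of C D n K (i := .c) (c, f)).trans rfl⟩
  | mul x y hx hy =>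
    obtain ⟨a, ha⟩ := hx
    obtain ⟨b, hb⟩ := hy
    exact ⟨a * b, by rw [map_mul, ha, hb]⟩

/-- The normal closure of `emb '' K`. -/
def Nc : Subgroup (Monoid.CoprodI (fam C D n)) :=
  Subgroup.normalClosure ((emb C D n) '' K)

instance : (Nc C D n K).Normal := Subgroup.normalClosure_normal

theorem emb_mem_Nc {c : C} (hc : c ∈ K) : emb C D n c ∈ Nc C D n K :=
  Subgroup.subset_normalClosure ⟨c, hc, rfl⟩

/-- `C/K`-component of the inverse map. -/
def psiC : (C ⧸ K) →* Monoid.CoprodI (fam C D n) ⧸ Nc C D n K :=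
  QuotientGroup.lift K ((QuotientGroup.mk' (Nc C D n K)).comp (emb C D n)) (by
    intro c hc
    rw [MonoidHom.mem_ker, MonoidHom.comp_apply, QuotientGroup.mk'_apply,
      QuotientGroup.eq_one_iff]
    exact emb_mem_Nc C D n K hc)

/-- `Fₙ`-component of the inverse map. -/
def psiF : FreeGroup (Fin n) →* Monoid.CoprodI (fam C D n) ⧸ Nc C D n K :=
  (QuotientGroup.mk' (Nc C D n K)).comp
    ((Monoid.CoprodI.of (M := fam C D n) (i := .c)).comp
      (MonoidHom.inr C (FreeGroup (Fin n))))

theorem psi_comm : ∀ a b, Commute (psiC C D n K a) (psiF C D n K b) := by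
  intro a b
  induction a using QuotientGroup.induction_on with
  | H c =>
    have hcomm : Commute (emb C D n c)
        (Monoid.CoprodI.of (M := fam C D n) (i := .c) ((1 : C), b)) := by
      show _ * _ = _ * _
      rw [show emb C D n c = Monoid.CoprodI.of (M := fam C D n) (i := .c) (c, 1) from rfl]
      exact (map_mul (Monoid.CoprodI.of (M := fam C D n) (i := .c)) ((c, 1) : fam C D n .c)
          ((1 : C), b)).symm.trans ((congrArg (Monoid.CoprodI.of (M := fam C D n) (i := .c))
          (show ((c, 1) * (1, b) : C × FreeGroup (Fin n)) = (1, b) * (c, 1) by simp)).trans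
          (map_mul (Monoid.CoprodI.of (M := fam C D n) (i := .c)) ((1 : C), b)
            ((c, 1) : fam C D n .c)))
    exact hcomm.map (QuotientGroup.mk' (Nc C D n K))

/-- components of the inverse map -/
def psiFam : ∀ i, fam (C ⧸ K) D n i →* Monoid.CoprodI (fam C D n) ⧸ Nc C D n K
  | .d => (QuotientGroup.mk' (Nc C D n K)).comp (Monoid.CoprodI.of (M := fam C D n) (i := .d))
  | .c => (psiC C D n K).noncommCoprod (psiF C D n K) (psi_comm C D n K)
  | .z => (QuotientGroup.mk' (Nc C D n K)).comp (Monoid.CoprodI.of (M := fam C D n) (i := .z))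

/-- The inverse map `D * ((C/K) × Fₙ) * Z → H₁ / Nc`. -/
def psi : Monoid.CoprodI (fam (C ⧸ K) D n) →* Monoid.CoprodI (fam C D n) ⧸ Nc C D n K :=
  Monoid.CoprodI.lift (psiFam C D n K)

theorem psi_phi (x : Monoid.CoprodI (fam C D n)) :
    psi C D n K (phi C D n K x) = QuotientGroup.mk' (Nc C D n K) x := by
  induction x using Monoid.CoprodI.induction_on with
  | one => simp
  | of i g =>
    match i with
    | .d => rw [phi_of]; rfl
    | .z => rw [phi_of]; rfl
    | .c =>
      obtain ⟨c, f⟩ := g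
      refine (congrArg (psi C D n K) ((phi_of C D n K (i := .c) (c, f)).trans rfl :
        _ = Monoid.CoprodI.of (M := fam (C ⧸ K) D n) (i := .c) (QuotientGroup.mk c, f))).trans ?_
      show psi C D n K (Monoid.CoprodI.of (M := fam (C ⧸ K) D n) (i := .c)
        (QuotientGroup.mk c, f)) = _
      rw [psi]
      refine (Monoid.CoprodI.lift_of (psiFam C D n K) (i := .c)
        ((QuotientGroup.mk c, f) : fam (C ⧸ K) D n .c)).trans ?_
      show (psiC C D n K) (QuotientGroup.mk c) * (psiF C D n K) f = _
      rw [psiC, QuotientGroup.lift_mk']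
      show QuotientGroup.mk' (Nc C D n K) (emb C D n c) *
        QuotientGroup.mk' (Nc C D n K) (Monoid.CoprodI.of (M := fam C D n) (i := .c) (1, f)) = _
      rw [← map_mul, ← of_c_eq]
  | mul x y hx hy => rw [map_mul, map_mul, hx, hy, map_mul]

theorem ker_phi : (phi C D n K).ker = Nc C D n K := by
  apply le_antisymm
  · intro x hx
    rw [MonoidHom.mem_ker] at hx
    have := psi_phi C D n K x
    rw [hx, map_one] at this
    have := this.symm
    rwa [QuotientGroup.mk'_apply, QuotientGroup.eq_one_iff] at this
  · apply Subgroup.normalClosure_le_normal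
    rintro _ ⟨c, hc, rfl⟩
    rw [SetLike.mem_coe, MonoidHom.mem_ker, phi_emb,
      show (QuotientGroup.mk c : C ⧸ K) = 1 from (QuotientGroup.eq_one_iff c).mpr hc,
      map_one]

theorem comap_emb_Nc : (Nc C D n K).comap (emb C D n) = K := by
  rw [← ker_phi]
  ext c
  rw [Subgroup.mem_comap, MonoidHom.mem_ker, phi_emb]
  constructor
  · intro h
    have := emb_injective (C ⧸ K) D n (by rw [h, map_one] : emb (C ⧸ K) D n _ = emb (C ⧸ K) D n 1)
    rwa [QuotientGroup.eq_one_iff] at this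
  · intro h
    rw [(QuotientGroup.eq_one_iff c).mpr h, map_one]

end Quot

end TorAux

namespace TorAux

theorem tor_zero (G : Type*) [Group G] : tor G 0 = ⊥ := rfl

theorem tor_succ (G : Type*) [Group G] (m : ℕ) :
    tor G (m + 1) =
      Subgroup.normalClosure {g : G | ∃ k : ℕ, 0 < k ∧ g ^ k ∈ tor G m} := rfl

theorem tor_normal (G : Type*) [Group G] (m : ℕ) : (tor G m).Normal := by
  cases m with
  | zero => rw [tor_zero]; infer_instance
  | succ m => rw [tor_succ]; exact Subgroup.normalClosure_normal

theorem tor_le_succ (G : Type*) [Group G] (m : ℕ) : tor G m ≤ tor G (m + 1) := by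
  intro g hg
  rw [tor_succ]
  exact Subgroup.subset_normalClosure ⟨1, one_pos, by simpa using hg⟩

theorem image_normalClosure_le {G H : Type*} [Group G] [Group H] (φ : G →* H) (S : Set G)
    {x : G} (hx : x ∈ Subgroup.normalClosure S) :
    φ x ∈ Subgroup.normalClosure (φ '' S) := by
  haveI : ((Subgroup.normalClosure (φ '' S)).comap φ).Normal :=
    Subgroup.Normal.comap Subgroup.normalClosure_normal φ
  have h : Subgroup.normalClosure S ≤ (Subgroup.normalClosure (φ '' S)).comap φ := by
    apply Subgroup.normalClosure_le_normal
    intro s hs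
    exact Subgroup.subset_normalClosure ⟨s, hs, rfl⟩
  exact h hx

end TorAux


open TorAux

/-- For any group `C`, a torsion-free group `D`, `n ∈ ℕ` and `Z` infinite cyclic, with
`H₁ = D * (C × Fₙ) * Z` and `ι : C → H₁` the canonical embedding, for every `m`:
`tor_m(H₁) = ⟪ι(tor_m C)⟫^{H₁}` and `ι⁻¹(tor_m H₁) = tor_m C`. -/
theorem tor_coprodI (C D : Type u) [Group C] [Group D]
    (hD : ∀ g : D, g ≠ 1 → ¬IsOfFinOrder g) (n : ℕ) :
    ∀ m : ℕ,
      tor (Monoid.CoprodI (fam C D n)) m =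
          Subgroup.normalClosure ((emb C D n) '' (tor C m : Set C)) ∧
        (tor (Monoid.CoprodI (fam C D n)) m).comap (emb C D n) = tor C m := by
  intro m
  induction m with
  | zero =>
    constructor
    · rw [tor_zero, tor_zero]
      refine le_antisymm bot_le (Subgroup.normalClosure_le_normal ?_)
      rintro _ ⟨c, hc, rfl⟩
      have hc1 : c = 1 := by simpa using hc
      simp [hc1]
    · rw [tor_zero, tor_zero]
      ext c
      simp only [Subgroup.mem_comap, Subgroup.mem_bot]
      constructor
      · intro h
        exact emb_injective C D n (by rw [h, map_one])
      · rintro rfl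
        exact map_one _
  | succ m ih =>
    obtain ⟨ih1, ih2⟩ := ih
    haveI hN1 : (tor C m).Normal := tor_normal C m
    haveI hN2 : (tor C (m + 1)).Normal := tor_normal C (m + 1)
    set SC : Set C := {g : C | ∃ k : ℕ, 0 < k ∧ g ^ k ∈ tor C m} with hSC
    set SH : Set (Monoid.CoprodI (fam C D n)) :=
      {g : Monoid.CoprodI (fam C D n) | ∃ k : ℕ, 0 < k ∧ g ^ k ∈ tor (Monoid.CoprodI (fam C D n)) m} with hSH
    set M : Subgroup (Monoid.CoprodI (fam C D n)) :=
      Subgroup.normalClosure ((emb C D n) '' (tor C (m + 1) : Set C)) with hM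
    haveI : M.Normal := Subgroup.normalClosure_normal
    have hsub : (emb C D n) '' (tor C m : Set C) ⊆ (M : Set _) := by
      rintro _ ⟨c, hc, rfl⟩
      exact Subgroup.subset_normalClosure ⟨c, tor_le_succ C m hc, rfl⟩
    have hNcM : Nc C D n (tor C m) ≤ M := Subgroup.normalClosure_le_normal hsub
    have key : tor (Monoid.CoprodI (fam C D n)) (m + 1) =
        Subgroup.normalClosure ((emb C D n) '' (tor C (m + 1) : Set C)) := by
      rw [tor_succ]
      apply le_antisymm
      · apply Subgroup.normalClosure_le_normal
        rintro x ⟨k, hk, hxk⟩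
        rw [ih1] at hxk
        have hxker : x ^ k ∈ (phi C D n (tor C m)).ker := by
          rw [ker_phi]; exact hxk
        have hφ : (phi C D n (tor C m) x) ^ k = 1 := by
          rw [← map_pow]; exact MonoidHom.mem_ker.mp hxker
        obtain ⟨h', cb, hcbk, hxe⟩ := classify (C ⧸ tor C m) D n hD hk _ hφ
        obtain ⟨h, rfl⟩ := phi_surjective C D n (tor C m) h'
        obtain ⟨c, rfl⟩ := QuotientGroup.mk_surjective cb
        have hcK : c ∈ tor C (m + 1) := by
          rw [tor_succ]
          apply Subgroup.subset_normalClosure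
          refine ⟨k, hk, ?_⟩
          rw [← QuotientGroup.eq_one_iff (N := tor C m)]
          rw [QuotientGroup.mk_pow]
          exact hcbk
        have hyM : h * emb C D n c * h⁻¹ ∈ M :=
          ‹M.Normal›.conj_mem _ (Subgroup.subset_normalClosure ⟨c, hcK, rfl⟩) h
        have hxy : x * (h * emb C D n c * h⁻¹)⁻¹ ∈ Nc C D n (tor C m) := by
          rw [← ker_phi, MonoidHom.mem_ker, map_mul, map_inv, map_mul, map_mul, map_inv,
            phi_emb, hxe]
          group
        have hx' : x = x * (h * emb C D n c * h⁻¹)⁻¹ * (h * emb C D n c * h⁻¹) := by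
          group
        rw [hx']
        exact M.mul_mem (hNcM hxy) hyM
      · apply Subgroup.normalClosure_le_normal
        rintro _ ⟨c, hc, rfl⟩
        rw [tor_succ] at hc
        have h1 : emb C D n c ∈
            Subgroup.normalClosure ((emb C D n) '' SC) :=
          image_normalClosure_le (emb C D n) SC hc
        have h2 : (emb C D n) '' SC ⊆ SH := by
          rintro _ ⟨c', ⟨k, hk, hck⟩, rfl⟩
          refine ⟨k, hk, ?_⟩
          rw [← map_pow, ih1]
          exact Subgroup.subset_normalClosure ⟨c' ^ k, hck, rfl⟩
        exact Subgroup.normalClosure_mono h2 h1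
    refine ⟨key, ?_⟩
    rw [key]
    exact comap_emb_Nc C D n (tor C (m + 1))
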